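/- For every integer n >= 2, (n+2alpha+1)(n+2alpha+2) P_n^{(alpha+1,alpha+1)}(x) - (n+alpha)(n+alpha+1) P_{n-2}^{(alpha+1,alpha+1)}(x) = 2(n+alpha+1)(2n+2alpha+1) P_n^{(alpha,alpha)}(x). -/

import Mathlib

noncomputable def poch (a : ℝ) (k : ℕ) : ℝ := ∏ m ∈ Finset.range k, (a + m)

noncomputable def lag (α : ℝ) (n : ℕ) (x : ℝ) : ℝ :=
  ∑ k ∈ Finset.range (n + 1),
    (-1) ^ k * (poch (α + k + 1) (n - k) / (n - k).factorial) * x ^ k / k.factorial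

noncomputable def jacobi (α β : ℝ) (n : ℕ) (x : ℝ) : ℝ :=
  ∑ k ∈ Finset.range (n + 1),
    poch ((n : ℝ) + α + β + 1) k * poch (α + k + 1) (n - k) /
      (k.factorial * (n - k).factorial) * ((x - 1) / 2) ^ k

noncomputable def charlier (a : ℝ) (n : ℕ) (x : ℝ) : ℝ :=
  ∑ m ∈ Finset.range (n + 1),
    (∏ j ∈ Finset.range m, (x - (j : ℝ))) / m.factorial * (-a) ^ (n - m) / (n - m).factorial
lemma poch_zero (a : ℝ) : poch a 0 = 1 := by simp [poch]

lemma poch_one (a : ℝ) : poch a 1 = a := by simp [poch]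

lemma poch_succ (a : ℝ) (k : ℕ) : poch a (k+1) = poch a k * (a + k) := by
  simp [poch, Finset.prod_range_succ]

lemma poch_shift (a : ℝ) (k : ℕ) : poch a (k+1) = a * poch (a+1) k := by
  rw [poch, Finset.prod_range_succ']
  simp only [Nat.cast_zero, add_zero]
  rw [mul_comm]
  congr 1
  apply Finset.prod_congr rfl
  intro i _
  push_cast
  ring

lemma poch_two (a : ℝ) (k : ℕ) :
    poch (a+2) k * (a*(a+1)) = poch a k * ((a+k)*(a+k+1)) := by
  induction k with
  | zero => simp [poch_zero]
  | succ k ih =>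
      rw [poch_succ, poch_succ]
      push_cast
      linear_combination (a + k + 2) * ih

lemma poch_add_two (b : ℝ) (j : ℕ) : poch b (j+2) = poch b j * ((b+j)*(b+j+1)) := by
  rw [poch_succ, poch_succ]; push_cast; ring

lemma poch_shift_two (b : ℝ) (j : ℕ) : poch b (j+2) = b * (poch (b+1) j * (b+1+j)) := by
  rw [poch_shift, poch_succ]

set_option maxHeartbeats 1000000 in
theorem stmt8 (α x : ℝ) (n : ℕ) (hn : 2 ≤ n) :
    (n + 2 * α + 1) * (n + 2 * α + 2) * jacobi (α + 1) (α + 1) n x -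
      (n + α) * (n + α + 1) * jacobi (α + 1) (α + 1) (n - 2) x =
      2 * (n + α + 1) * (2 * n + 2 * α + 1) * jacobi α α n x := by
  obtain ⟨m, rfl⟩ : ∃ m, n = m + 2 := ⟨n - 2, by omega⟩
  simp only [Nat.add_sub_cancel]
  unfold jacobi
  rw [Finset.mul_sum, Finset.mul_sum, Finset.mul_sum]
  set c2 : ℝ := (↑(m+2) + α) * (↑(m+2) + α + 1) with hc2
  set f2 : ℕ → ℝ := fun k =>
    poch ((m : ℝ) + (α+1) + (α+1) + 1) k * poch ((α+1) + k + 1) (m - k) /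
      (k.factorial * (m - k).factorial) * ((x - 1) / 2) ^ k with hf2
  have hmid : ∑ k ∈ Finset.range (m+1), c2 * f2 k
      = ∑ k ∈ Finset.range (m+2+1), (if k < m+1 then c2 * f2 k else 0) := by
    rw [← Finset.sum_subset (Finset.range_subset_range.2 (show m+1 ≤ m+2+1 by omega))
      (fun y _ hny => if_neg (by simpa using hny))]
    exact Finset.sum_congr rfl fun y hy => (if_pos (Finset.mem_range.1 hy)).symm
  rw [hmid, ← Finset.sum_sub_distrib]
  apply Finset.sum_congr rfl
  intro k hk
  simp only [Finset.mem_range] at hk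
  by_cases hkm : k < m + 1
  · rw [if_pos hkm]
    simp only [hf2, hc2]
    obtain ⟨j, rfl⟩ : ∃ j, m = k + j := ⟨m - k, by omega⟩
    rw [show k + j + 2 - k = j + 2 from by omega, show k + j - k = j from by omega]
    rw [show ((k+j+2 : ℕ) : ℝ) + (α+1) + (α+1) + 1 = (↑k+↑j+2*α+3)+2 from by push_cast; ring]
    rw [show ((k+j : ℕ) : ℝ) + (α+1) + (α+1) + 1 = (↑k+↑j+2*α+3) from by push_cast; ring]
    rw [show ((k+j+2 : ℕ) : ℝ) + α + α + 1 = (↑k+↑j+2*α+3) from by push_cast; ring]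
    rw [poch_add_two (α+1+(k:ℝ)+1) j, poch_shift_two (α+(k:ℝ)+1) j]
    rw [show (α+(k:ℝ)+1+1) = α+1+↑k+1 from by ring]
    rw [show ((j+2).factorial : ℝ) = ((j:ℝ)+2) * (((j:ℝ)+1) * ↑j.factorial) from by
      rw [show j+2 = (j+1)+1 from rfl, Nat.factorial_succ, Nat.factorial_succ]; push_cast; ring]
    have hk0 : (k.factorial : ℝ) ≠ 0 := Nat.cast_ne_zero.2 (Nat.factorial_ne_zero k)
    have hj0 : (j.factorial : ℝ) ≠ 0 := Nat.cast_ne_zero.2 (Nat.factorial_ne_zero j)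
    have h1 : ((j:ℝ)+1) ≠ 0 := by positivity
    have h2 : ((j:ℝ)+2) ≠ 0 := by positivity
    push_cast
    field_simp
    linear_combination ((α+(k:ℝ)+(j:ℝ)+2)*(α+(k:ℝ)+(j:ℝ)+3) * poch (α+1+(k:ℝ)+1) j * ((x-1)/2)^k) * poch_two ((k:ℝ)+(j:ℝ)+2*α+3) k
  · rw [if_neg hkm, sub_zero]
    have hk' : k = m+1 ∨ k = m+2 := by omega
    rcases hk' with rfl | rfl
    · rw [show m+2-(m+1) = 1 from by omega]
      rw [show ((m+2:ℕ):ℝ) + (α+1) + (α+1) + 1 = ((m:ℝ)+2*α+3)+2 from by push_cast; ring]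
      rw [show ((m+2:ℕ):ℝ) + α + α + 1 = ((m:ℝ)+2*α+3) from by push_cast; ring]
      rw [poch_one, poch_one]
      simp only [Nat.factorial_one, Nat.cast_one]
      push_cast
      have hR := poch_two ((m:ℝ)+2*α+3) (m+1)
      push_cast at hR
      linear_combination ((α+(m:ℝ)+3) * ((x-1)/2)^(m+1) / (((m+1).factorial : ℝ))) * hR
    · rw [show m+2-(m+2) = 0 from by omega]
      rw [show ((m+2:ℕ):ℝ) + (α+1) + (α+1) + 1 = ((m:ℝ)+2*α+3)+2 from by push_cast; ring]
      rw [show ((m+2:ℕ):ℝ) + α + α + 1 = ((m:ℝ)+2*α+3) from by push_cast; ring]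
      rw [poch_zero, poch_zero]
      simp only [Nat.factorial_zero, Nat.cast_one]
      push_cast
      have hR := poch_two ((m:ℝ)+2*α+3) (m+2)
      push_cast at hR
      linear_combination (((x-1)/2)^(m+2) / (((m+2).factorial : ℝ))) * hR
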